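/- Weak duality for the first-order continuous problem (Corollary 4.1 direction): let φ : ℝⁿ → ℝ be convex, F : ℝⁿ ⇉ ℝⁿ with nonempty graph, Q₀ ⊆ ℝⁿ nonempty. For every x ∈ C¹([0,1], ℝⁿ) with x'(t) ∈ F(x(t)) for all t and x(0) ∈ Q₀, and every x* ∈ C¹([0,1], ℝⁿ), φ(x(1)) ≥ −φ*(−x*(1)) + ∫₀¹ M_F(−x*'(t), x*(t)) dt − W_{Q₀}(x*(0)), provided t ↦ M_F(−x*'(t), x*(t)) is integrable and W_{Q₀}(x*(0)) < ∞. -/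

import Mathlib

open Matrix

lemma cont_dot {n : ℕ} {a b : ℝ → (Fin n → ℝ)} (ha : Continuous a) (hb : Continuous b) :
    Continuous (fun t => a t ⬝ᵥ b t) := by
  simp only [dotProduct]
  exact continuous_finset_sum _ fun i _ =>
    ((continuous_apply i).comp ha).mul ((continuous_apply i).comp hb)

lemma dot_hasDerivAt {n : ℕ} (x xs : ℝ → (Fin n → ℝ)) (hx : ContDiff ℝ 1 x)
    (hxs : ContDiff ℝ 1 xs) (t : ℝ) :
    HasDerivAt (fun s => x s ⬝ᵥ xs s)
      (deriv x t ⬝ᵥ xs t + x t ⬝ᵥ deriv xs t) t := by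
  have hx' := (hx.differentiable one_ne_zero t).hasDerivAt
  have hxs' := (hxs.differentiable one_ne_zero t).hasDerivAt
  have hcomp : ∀ i : Fin n, HasDerivAt (fun s => x s i * xs s i)
      (deriv x t i * xs t i + x t i * deriv xs t i) t := by
    intro i
    have h1 : HasDerivAt (fun s => x s i) (deriv x t i) t := by
      exact ((ContinuousLinearMap.proj i :
        (Fin n → ℝ) →L[ℝ] ℝ).hasFDerivAt.comp_hasDerivAt t hx')
    have h2 : HasDerivAt (fun s => xs s i) (deriv xs t i) t := by
      exact ((ContinuousLinearMap.proj i :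
        (Fin n → ℝ) →L[ℝ] ℝ).hasFDerivAt.comp_hasDerivAt t hxs')
    exact h1.mul h2
  have := HasDerivAt.fun_sum (fun i (_ : i ∈ Finset.univ) => hcomp i)
  simpa [dotProduct, Finset.sum_add_distrib] using this

/-- Weak duality for the first-order continuous problem: for
every feasible arc x and every C¹ adjoint arc x*,
φ(x(1)) ≥ −φ*(−x*(1)) + ∫₀¹ M_F(−x*'(t), x*(t)) dt − W_{Q₀}(x*(0)),
provided the integrand is (real-valued and) integrable and W_{Q₀}(x*(0)) < ∞. -/
theorem first_order_weak_duality (n : ℕ)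
    (φ : (Fin n → ℝ) → ℝ) (hφ : ConvexOn ℝ Set.univ φ)
    (F : (Fin n → ℝ) → Set (Fin n → ℝ))
    (hF : ∃ p : (Fin n → ℝ) × (Fin n → ℝ), p.2 ∈ F p.1)
    (Q₀ : Set (Fin n → ℝ)) (hQ₀ : Q₀.Nonempty)
    (x xs : ℝ → (Fin n → ℝ)) (hx : ContDiff ℝ 1 x) (hxs : ContDiff ℝ 1 xs)
    (hincl : ∀ t ∈ Set.Icc (0:ℝ) 1, deriv x t ∈ F (x t)) (hx0 : x 0 ∈ Q₀)
    (m : ℝ → ℝ)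
    (hm : ∀ t, (m t : EReal) =
      ⨅ y : Fin n → ℝ, ⨅ v ∈ F y, ((y ⬝ᵥ (-(deriv xs t)) - v ⬝ᵥ xs t : ℝ) : EReal))
    (hmint : IntervalIntegrable m MeasureTheory.volume 0 1)
    (w : ℝ) (hw : (w : EReal) = ⨆ y ∈ Q₀, ((y ⬝ᵥ xs 0 : ℝ) : EReal)) :
    -(⨆ y : Fin n → ℝ, ((y ⬝ᵥ (-(xs 1)) - φ y : ℝ) : EReal)) +
        (((∫ t in (0:ℝ)..1, m t) - w : ℝ) : EReal) ≤ (φ (x 1) : EReal) := by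
  -- bound on the sup (conjugate) term
  have hS : ((x 1 ⬝ᵥ (-(xs 1)) - φ (x 1) : ℝ) : EReal) ≤
      ⨆ y : Fin n → ℝ, ((y ⬝ᵥ (-(xs 1)) - φ y : ℝ) : EReal) :=
    le_iSup (fun y : Fin n → ℝ => ((y ⬝ᵥ (-(xs 1)) - φ y : ℝ) : EReal)) (x 1)
  have hSneg : -(⨆ y : Fin n → ℝ, ((y ⬝ᵥ (-(xs 1)) - φ y : ℝ) : EReal)) ≤
      ((φ (x 1) - x 1 ⬝ᵥ (-(xs 1)) : ℝ) : EReal) := by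
    have := EReal.neg_le_neg_iff.2 hS
    calc -(⨆ y : Fin n → ℝ, ((y ⬝ᵥ (-(xs 1)) - φ y : ℝ) : EReal)) ≤
        -((x 1 ⬝ᵥ (-(xs 1)) - φ (x 1) : ℝ) : EReal) := this
      _ = ((φ (x 1) - x 1 ⬝ᵥ (-(xs 1)) : ℝ) : EReal) := by
          rw [← EReal.coe_neg]; norm_num
  -- bound on w
  have hwge : x 0 ⬝ᵥ xs 0 ≤ w := by
    have : ((x 0 ⬝ᵥ xs 0 : ℝ) : EReal) ≤ (w : EReal) := by
      rw [hw]
      exact le_iSup₂ (f := fun y (_ : y ∈ Q₀) => ((y ⬝ᵥ xs 0 : ℝ) : EReal)) (x 0) hx0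
    exact_mod_cast this
  -- pointwise bound on m
  have hmle : ∀ t ∈ Set.Icc (0:ℝ) 1,
      m t ≤ x t ⬝ᵥ (-(deriv xs t)) - deriv x t ⬝ᵥ xs t := by
    intro t ht
    have h1 : ((m t : ℝ) : EReal) ≤
        ((x t ⬝ᵥ (-(deriv xs t)) - deriv x t ⬝ᵥ xs t : ℝ) : EReal) := by
      rw [hm t]
      exact iInf_le_of_le (x t) (iInf₂_le (deriv x t) (hincl t ht))
    exact_mod_cast h1
  -- integration by parts / FTC
  set g : ℝ → ℝ := fun s => x s ⬝ᵥ xs s with hg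
  have hgderiv : ∀ t : ℝ, HasDerivAt g (deriv x t ⬝ᵥ xs t + x t ⬝ᵥ deriv xs t) t :=
    fun t => dot_hasDerivAt x xs hx hxs t
  have hcont : Continuous (fun t => x t ⬝ᵥ (-(deriv xs t)) - deriv x t ⬝ᵥ xs t) :=
    (cont_dot hx.continuous (hxs.continuous_deriv le_rfl).neg).sub
      (cont_dot (hx.continuous_deriv le_rfl) hxs.continuous)
  have hint2 : IntervalIntegrable
      (fun t => x t ⬝ᵥ (-(deriv xs t)) - deriv x t ⬝ᵥ xs t)
      MeasureTheory.volume 0 1 := hcont.intervalIntegrable 0 1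
  have hFTC : (∫ t in (0:ℝ)..1, (deriv x t ⬝ᵥ xs t + x t ⬝ᵥ deriv xs t)) =
      g 1 - g 0 := by
    apply intervalIntegral.integral_eq_sub_of_hasDerivAt
    · exact fun t _ => hgderiv t
    · exact ((cont_dot (hx.continuous_deriv le_rfl) hxs.continuous).add
        (cont_dot hx.continuous (hxs.continuous_deriv le_rfl))).intervalIntegrable 0 1
  have hintle : (∫ t in (0:ℝ)..1, m t) ≤ g 0 - g 1 := by
    have h1 : (∫ t in (0:ℝ)..1, m t) ≤
        ∫ t in (0:ℝ)..1, (x t ⬝ᵥ (-(deriv xs t)) - deriv x t ⬝ᵥ xs t) :=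
      intervalIntegral.integral_mono_on (by norm_num) hmint hint2 hmle
    have h2 : (∫ t in (0:ℝ)..1, (x t ⬝ᵥ (-(deriv xs t)) - deriv x t ⬝ᵥ xs t)) =
        -(∫ t in (0:ℝ)..1, (deriv x t ⬝ᵥ xs t + x t ⬝ᵥ deriv xs t)) := by
      rw [← intervalIntegral.integral_neg]
      congr 1
      funext t
      simp [dotProduct_neg]
      ring
    rw [h2, hFTC] at h1
    linarith
  -- combine
  have hreal : ((∫ t in (0:ℝ)..1, m t) - w : ℝ) ≤ -(x 1 ⬝ᵥ xs 1) + x 0 ⬝ᵥ xs 0 - x 0 ⬝ᵥ xs 0 := by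
    simp only [hg] at hintle
    have : (g 0 : ℝ) = x 0 ⬝ᵥ xs 0 := rfl
    have hg1 : (g 1 : ℝ) = x 1 ⬝ᵥ xs 1 := rfl
    simp only [hg] at *
    linarith
  calc -(⨆ y : Fin n → ℝ, ((y ⬝ᵥ (-(xs 1)) - φ y : ℝ) : EReal)) +
        (((∫ t in (0:ℝ)..1, m t) - w : ℝ) : EReal)
      ≤ ((φ (x 1) - x 1 ⬝ᵥ (-(xs 1)) : ℝ) : EReal) +
        ((-(x 1 ⬝ᵥ xs 1) + x 0 ⬝ᵥ xs 0 - x 0 ⬝ᵥ xs 0 : ℝ) : EReal) := by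
        exact add_le_add hSneg (by exact_mod_cast hreal)
    _ = (φ (x 1) : EReal) := by
        rw [← EReal.coe_add]
        norm_num [dotProduct_neg]
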